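/- In the QC model, assume additionally that α(i) ≤ 2/(λ₂ + λ_N) for all i. Then the mean state vectors converge to the consensus vector r𝟏 at an exponential rate governed by the partial sums of the weights: for every i ≥ 0, ‖𝔼[x(i)] − r𝟏‖ ≤ exp(−λ₂·∑_{j=0}^{i−1} α(j))·‖x(0) − r𝟏‖. -/

import Mathlib

open MeasureTheory ProbabilityTheory Filter Finset

noncomputable section

/-- Euclidean norm on `Fin N → ℝ`. -/
def euclNorm {N : ℕ} (y : Fin N → ℝ) : ℝ := Real.sqrt (∑ n, (y n) ^ 2)

/-- Quadratic form `yᵀ A y`. -/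
def quadForm {N : ℕ} (A : Matrix (Fin N) (Fin N) ℝ) (y : Fin N → ℝ) : ℝ :=
  ∑ n, y n * A.mulVec y n

/-- Componentwise average `(1/N) 𝟏ᵀ y`. -/
def avgOf {N : ℕ} (y : Fin N → ℝ) : ℝ := (∑ n, y n) / N

/-- Orthogonal projection of `y` onto the orthogonal complement of the consensus
subspace `𝒞 = {a𝟏 : a ∈ ℝ}`. -/
def perpOf {N : ℕ} (y : Fin N → ℝ) : Fin N → ℝ := fun n => y n - avgOf y

/-- The sequence `g(i) = α(i)² max(λ_N³/λ₂ + 4N²λ_N/λ₂, 2MΔ²λ_N/3)`. -/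
def gseq (N M : ℕ) (Δ lam2 lamN : ℝ) (α : ℕ → ℝ) (i : ℕ) : ℝ :=
  α i ^ 2 * max (lamN ^ 3 / lam2 + 4 * N ^ 2 * lamN / lam2) (2 * M * Δ ^ 2 * lamN / 3)

/-- The QC (dithered quantized consensus with random link failures) model. -/
structure QCModel (N : ℕ) (Δ : ℝ) (M : ℕ) (α : ℕ → ℝ)
    (Lbar : Matrix (Fin N) (Fin N) ℝ) (lam2 lamN : ℝ)
    {Ω : Type} [mΩ : MeasurableSpace Ω] (Pr : Measure Ω)
    (x0 : Fin N → ℝ)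
    (x : ℕ → Ω → Fin N → ℝ)
    (L : ℕ → Ω → Matrix (Fin N) (Fin N) ℝ)
    (Υ Ψ : ℕ → Ω → Fin N → ℝ)
    (ℱ : Filtration ℕ mΩ) : Prop where
  hprob : IsProbabilityMeasure Pr
  hN : 2 ≤ N
  hΔ : 0 < Δ
  hM : 1 ≤ M
  hα_pos : ∀ i, 0 < α i
  hα_div : Tendsto (fun n => ∑ i ∈ Finset.range n, α i) atTop atTop
  hα_sq : Summable fun i => α i ^ 2
  hLbar_symm : Lbar.IsSymm
  hLbar_psd : Lbar.PosSemidef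
  hLbar_one : Lbar.mulVec 1 = 0
  hlam2_pos : 0 < lam2
  hlam_le : lam2 ≤ lamN
  hspec_lo : ∀ y : Fin N → ℝ, ∑ n, y n = 0 → lam2 * euclNorm y ^ 2 ≤ quadForm Lbar y
  hspec_hi : ∀ y : Fin N → ℝ, ∑ n, y n = 0 → quadForm Lbar y ≤ lamN * euclNorm y ^ 2
  hx0 : ∀ ω, x 0 ω = x0
  hL_meas : ∀ i n m, Measurable fun ω => L i ω n m
  hΥ_meas : ∀ i, Measurable (Υ i)
  hΨ_meas : ∀ i, Measurable (Ψ i)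
  hL_symm : ∀ i ω, (L i ω).IsSymm
  hL_one : ∀ i, ∀ᵐ ω ∂Pr, (L i ω).mulVec 1 = 0
  hL_mean : ∀ i n m, ∫ ω, L i ω n m ∂Pr = Lbar n m
  hL_op : ∀ i, ∀ᵐ ω ∂Pr, ∀ y : Fin N → ℝ,
    euclNorm ((L i ω - Lbar).mulVec y) ≤ 2 * N * euclNorm y
  hΥ_L2 : ∀ i, MemLp (Υ i) 2 Pr
  hΨ_L2 : ∀ i, MemLp (Ψ i) 2 Pr
  hΥ_mean : ∀ i n, ∫ ω, Υ i ω n ∂Pr = 0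
  hΨ_mean : ∀ i n, ∫ ω, Ψ i ω n ∂Pr = 0
  hvar_eq : ∀ i, ∫ ω, euclNorm (Υ i ω) ^ 2 ∂Pr = ∫ ω, euclNorm (Ψ i ω) ^ 2 ∂Pr
  hvar_le : ∀ i, ∫ ω, euclNorm (Υ i ω) ^ 2 ∂Pr ≤ M * Δ ^ 2 / 6
  hℱ : ∀ i, ℱ i = ⨆ j ∈ Set.Iio i,
      (MeasurableSpace.comap (fun ω n m => L j ω n m) inferInstance ⊔
       MeasurableSpace.comap (Υ j) inferInstance ⊔
       MeasurableSpace.comap (Ψ j) inferInstance)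
  hindep : ∀ i, iIndep
      ![MeasurableSpace.comap (fun ω n m => L i ω n m) inferInstance,
        MeasurableSpace.comap (Υ i) inferInstance,
        MeasurableSpace.comap (Ψ i) inferInstance,
        ℱ i] Pr
  hrec : ∀ i ω, x (i + 1) ω = x i ω - α i • ((L i ω).mulVec (x i ω) + Υ i ω + Ψ i ω)


section AuxLemmas
open Matrix
variable {N : ℕ}

variable {N : ℕ}

lemma euclNorm_nonneg (y : Fin N → ℝ) : 0 ≤ euclNorm y := Real.sqrt_nonneg _

lemma euclNorm_sq (y : Fin N → ℝ) : euclNorm y ^ 2 = ∑ n, y n ^ 2 := by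
  rw [euclNorm, Real.sq_sqrt]; positivity

lemma dot_eq_sumsq (y : Fin N → ℝ) : y ⬝ᵥ y = ∑ n, y n ^ 2 := by
  simp [dotProduct, sq]

lemma quadForm_eq_dot (A : Matrix (Fin N) (Fin N) ℝ) (y : Fin N → ℝ) :
    quadForm A y = y ⬝ᵥ A.mulVec y := rfl

lemma abs_le_euclNorm (y : Fin N → ℝ) (n : Fin N) : |y n| ≤ euclNorm y := by
  rw [euclNorm, ← Real.sqrt_sq_eq_abs]
  exact Real.sqrt_le_sqrt (Finset.single_le_sum (f := fun k => y k ^ 2)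
    (fun k _ => sq_nonneg _) (Finset.mem_univ n))

lemma euclNorm_single (m : Fin N) : euclNorm ((Pi.single m 1 : Fin N → ℝ)) = 1 := by
  rw [euclNorm]
  have : ∑ n, ((Pi.single m 1 : Fin N → ℝ) n) ^ 2 = 1 := by
    simp [Pi.single_apply, Finset.sum_ite_eq']
  rw [this, Real.sqrt_one]

lemma isSymm_apply {A : Matrix (Fin N) (Fin N) ℝ} (hs : A.IsSymm) (p q : Fin N) :
    A p q = A q p := by
  conv_lhs => rw [← hs, Matrix.transpose_apply]

lemma row_sum_zero {A : Matrix (Fin N) (Fin N) ℝ} (h1 : A.mulVec 1 = 0) (p : Fin N) :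
    ∑ k, A p k = 0 := by
  have := congrFun h1 p
  simpa [Matrix.mulVec, dotProduct] using this

lemma sum_mulVec_zero {A : Matrix (Fin N) (Fin N) ℝ} (hs : A.IsSymm) (h1 : A.mulVec 1 = 0)
    (v : Fin N → ℝ) : ∑ n, (A.mulVec v) n = 0 := by
  have : ∑ n, (A.mulVec v) n = ∑ k, (∑ n, A n k) * v k := by
    simp only [Matrix.mulVec, dotProduct]
    rw [Finset.sum_comm]
    simp [Finset.sum_mul]
  rw [this]
  have hz : ∀ k, (∑ n, A n k) = 0 := by
    intro k
    have : ∑ n, A n k = ∑ n, A k n := Finset.sum_congr rfl fun n _ => isSymm_apply hs n k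
    rw [this]; exact row_sum_zero h1 k
  simp [hz]

end AuxLemmas

section KeyLemmas
open Matrix
open scoped MatrixOrder
lemma realHerm_transpose {N : ℕ} {M : Matrix (Fin N) (Fin N) ℝ} (hh : M.IsHermitian) :
    Mᵀ = M := hh

lemma key_quad {N : ℕ} {Lb : Matrix (Fin N) (Fin N) ℝ} {lam2 lamN : ℝ}
    (hN : 0 < N) (hsymm : Lb.IsSymm) (hone : Lb.mulVec 1 = 0)
    (hlam2 : 0 < lam2) (hle : lam2 ≤ lamN)
    (hlo : ∀ y : Fin N → ℝ, ∑ n, y n = 0 → lam2 * euclNorm y ^ 2 ≤ quadForm Lb y)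
    (hhi : ∀ y : Fin N → ℝ, ∑ n, y n = 0 → quadForm Lb y ≤ lamN * euclNorm y ^ 2)
    (y : Fin N → ℝ) (hy : ∑ n, y n = 0) :
    (Lb.mulVec y) ⬝ᵥ (Lb.mulVec y) ≤
      (lam2 + lamN) * (y ⬝ᵥ Lb.mulVec y) - lam2 * lamN * (y ⬝ᵥ y) := by
  have hNR : (0:ℝ) < N := by exact_mod_cast hN
  set J : Matrix (Fin N) (Fin N) ℝ := Matrix.of (fun _ _ => 1) with hJ
  set A : Matrix (Fin N) (Fin N) ℝ := Lb + (lam2 / N) • J with hA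
  have hJv : ∀ v : Fin N → ℝ, J.mulVec v = fun _ => ∑ k, v k := by
    intro v; funext p; simp [hJ, Matrix.mulVec, dotProduct]
  have hJsymm : J.IsSymm := by ext p q; rfl
  have hAsymm : A.IsSymm := by
    rw [hA, Matrix.IsSymm, Matrix.transpose_add, Matrix.transpose_smul, hsymm, hJsymm]
  -- quadratic form decomposition
  have hdec : ∀ v : Fin N → ℝ,
      v ⬝ᵥ A.mulVec v = quadForm Lb (fun n => v n - (∑ k, v k) / N)
        + lam2 / N * (∑ k, v k) ^ 2 ∧
      v ⬝ᵥ v = (∑ n, (v n - (∑ k, v k) / N) ^ 2) + (∑ k, v k) ^ 2 / N := by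
    intro v
    set a : ℝ := (∑ k, v k) / N with ha
    set w : Fin N → ℝ := fun n => v n - a with hw
    have hsumw : ∑ n, w n = 0 := by
      simp only [hw, Finset.sum_sub_distrib, Finset.sum_const, card_univ, Fintype.card_fin,
        nsmul_eq_mul, ha]
      field_simp
      ring
    have hsumv : ∑ k, v k = N * a := by rw [ha]; field_simp
    have hveq : v = fun n => w n + a := by funext n; simp [hw]
    constructor
    · have hLbv : Lb.mulVec v = Lb.mulVec w := by
        have : v = w + a • (1 : Fin N → ℝ) := by funext n; simp [hw, Pi.smul_apply]
        rw [this, Matrix.mulVec_add, Matrix.mulVec_smul, hone]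
        simp
      have hJvv : J.mulVec v = fun _ => N * a := by rw [hJv]; funext p; simp [hsumv]
      rw [hA, Matrix.add_mulVec, Matrix.smul_mulVec, hLbv, hJvv]
      rw [dotProduct_add]
      have h1 : v ⬝ᵥ Lb.mulVec w = w ⬝ᵥ Lb.mulVec w + a * ∑ p, (Lb.mulVec w) p := by
        rw [hveq]
        simp only [dotProduct]
        rw [Finset.mul_sum, ← Finset.sum_add_distrib]
        exact Finset.sum_congr rfl fun p _ => by ring
      rw [h1, sum_mulVec_zero hsymm hone w]
      have h2 : v ⬝ᵥ ((lam2 / N) • fun _ => N * a) = lam2 / N * (∑ k, v k) ^ 2 := by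
        simp only [dotProduct, Pi.smul_apply, smul_eq_mul]
        rw [hsumv]
        rw [← Finset.sum_mul]
        rw [hsumv]
        ring
      rw [h2, quadForm_eq_dot]
      ring
    · have : ∀ n, v n * v n = w n ^ 2 + 2 * a * w n + a ^ 2 := fun n => by
        simp [hw]; ring
      simp only [dotProduct]
      rw [Finset.sum_congr rfl fun n _ => this n]
      rw [Finset.sum_add_distrib, Finset.sum_add_distrib, ← Finset.mul_sum, hsumw,
        Finset.sum_const, card_univ, Fintype.card_fin, nsmul_eq_mul, hsumv]
      field_simp
      ring
  have hwsum : ∀ v : Fin N → ℝ, ∑ n, (fun n => v n - (∑ k, v k) / N) n = 0 := by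
    intro v
    simp only [Finset.sum_sub_distrib, Finset.sum_const, card_univ, Fintype.card_fin,
      nsmul_eq_mul]
    field_simp
    ring
  have hAlo : ∀ v : Fin N → ℝ, lam2 * (v ⬝ᵥ v) ≤ v ⬝ᵥ A.mulVec v := by
    intro v
    obtain ⟨hq, hp⟩ := hdec v
    have hl := hlo _ (hwsum v)
    rw [euclNorm_sq] at hl
    have hr : lam2 * ((∑ k, v k) ^ 2 / N) = lam2 / N * (∑ k, v k) ^ 2 := by ring
    rw [hq, hp]
    rw [mul_add, hr]
    linarith
  have hAhi : ∀ v : Fin N → ℝ, v ⬝ᵥ A.mulVec v ≤ lamN * (v ⬝ᵥ v) := by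
    intro v
    obtain ⟨hq, hp⟩ := hdec v
    have hl := hhi _ (hwsum v)
    rw [euclNorm_sq] at hl
    have hr : lam2 / N * (∑ k, v k) ^ 2 ≤ lamN * ((∑ k, v k) ^ 2 / N) := by
      rw [show lamN * ((∑ k, v k) ^ 2 / N) = lamN / N * (∑ k, v k) ^ 2 by ring]
      gcongr
    rw [hq, hp, mul_add]
    linarith
  set P : Matrix (Fin N) (Fin N) ℝ := A - lam2 • (1 : Matrix (Fin N) (Fin N) ℝ) with hPdef
  set Q : Matrix (Fin N) (Fin N) ℝ := lamN • (1 : Matrix (Fin N) (Fin N) ℝ) - A with hQdef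
  have hPsymm : P.IsSymm := by
    rw [hPdef, Matrix.IsSymm, Matrix.transpose_sub, Matrix.transpose_smul,
      Matrix.transpose_one, hAsymm]
  have hQsymm : Q.IsSymm := by
    rw [hQdef, Matrix.IsSymm, Matrix.transpose_sub, Matrix.transpose_smul,
      Matrix.transpose_one, hAsymm]
  have hPsd : P.PosSemidef := by
    refine Matrix.posSemidef_iff_dotProduct_mulVec.mpr ⟨?_, ?_⟩
    · ext p q
      simp only [Matrix.conjTranspose_apply, RCLike.star_def, starRingEnd_apply, star_trivial]
      exact isSymm_apply hPsymm q p
    · intro xv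
      have hxv : star xv = xv := by simp
      rw [hxv]
      have hPx : P *ᵥ xv = A *ᵥ xv - lam2 • xv := by
        rw [hPdef, Matrix.sub_mulVec, Matrix.smul_mulVec, Matrix.one_mulVec]
      rw [hPx, dotProduct_sub, dotProduct_smul]
      have := hAlo xv
      simp only [smul_eq_mul]
      linarith
  have hQsd : Q.PosSemidef := by
    refine Matrix.posSemidef_iff_dotProduct_mulVec.mpr ⟨?_, ?_⟩
    · ext p q
      simp only [Matrix.conjTranspose_apply, RCLike.star_def, starRingEnd_apply, star_trivial]
      exact isSymm_apply hQsymm q p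
    · intro xv
      have hxv : star xv = xv := by simp
      rw [hxv]
      have hQx : Q *ᵥ xv = lamN • xv - A *ᵥ xv := by
        rw [hQdef, Matrix.sub_mulVec, Matrix.smul_mulVec, Matrix.one_mulVec]
      rw [hQx, dotProduct_sub, dotProduct_smul]
      have := hAhi xv
      simp only [smul_eq_mul]
      linarith
  obtain ⟨S, hSps, hSS⟩ : ∃ S : Matrix (Fin N) (Fin N) ℝ, S.PosSemidef ∧ S * S = P :=
    ⟨CFC.sqrt P, Matrix.nonneg_iff_posSemidef.mp (CFC.sqrt_nonneg P),
      CFC.sqrt_mul_sqrt_self P (Matrix.nonneg_iff_posSemidef.mpr hPsd)⟩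
  have hQP : Q = (lamN - lam2) • (1 : Matrix (Fin N) (Fin N) ℝ) - P := by
    rw [hPdef, hQdef, sub_smul]
    abel
  have hcomm : S * Q = Q * S := by
    rw [hQP, ← hSS]
    simp only [Matrix.mul_sub, Matrix.sub_mul, Matrix.mul_smul, Matrix.smul_mul,
      Matrix.mul_one, Matrix.one_mul, Matrix.mul_assoc]
  have hfact : P * Q = S * (Q * S) := by rw [← hSS, Matrix.mul_assoc, hcomm]
  have hSsym : Sᵀ = S := by
    ext p q
    have hh := congrFun (congrFun hSps.1 p) q
    simp only [Matrix.conjTranspose_apply, RCLike.star_def, starRingEnd_apply,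
      star_trivial] at hh
    simpa [Matrix.transpose_apply] using hh
  have hPQ : ∀ v : Fin N → ℝ, 0 ≤ v ⬝ᵥ (P * Q) *ᵥ v := by
    intro v
    have h0 := hQsd.dotProduct_mulVec_nonneg (S *ᵥ v)
    have hs : star (S *ᵥ v) = S *ᵥ v := by simp
    rw [hs] at h0
    have heq : v ⬝ᵥ (P * Q) *ᵥ v = (S *ᵥ v) ⬝ᵥ Q *ᵥ (S *ᵥ v) := by
      rw [hfact, ← Matrix.mulVec_mulVec, Matrix.dotProduct_mulVec, ← Matrix.mulVec_mulVec]
      congr 1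
      conv_lhs => rw [← hSsym]
      rw [Matrix.vecMul_transpose]
    rw [heq]
    exact h0
  have hz : ∑ n, (Lb *ᵥ y) n = 0 := sum_mulVec_zero hsymm hone y
  have hAv : ∀ v : Fin N → ℝ, ∑ n, v n = 0 → A *ᵥ v = Lb *ᵥ v := by
    intro v hv
    rw [hA, Matrix.add_mulVec, Matrix.smul_mulVec, hJv]
    have hz0 : (fun _ : Fin N => ∑ k, v k) = (0 : Fin N → ℝ) := by
      funext p; simp [hv]
    rw [hz0, smul_zero, add_zero]
  have hexp : P * Q = (lam2 + lamN) • A - A * A - (lam2 * lamN) • (1 : Matrix (Fin N) (Fin N) ℝ) := by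
    have h1 : P * Q = lamN • A - A * A - (lam2 * lamN) • (1 : Matrix (Fin N) (Fin N) ℝ)
        + lam2 • A := by
      rw [hPdef, hQdef]
      simp only [Matrix.sub_mul, Matrix.mul_sub, Matrix.smul_mul, Matrix.mul_smul,
        Matrix.one_mul, Matrix.mul_one, smul_smul]
      module
    rw [h1, add_smul]
    module
  have h0 := hPQ y
  rw [hexp] at h0
  simp only [Matrix.sub_mulVec, Matrix.smul_mulVec, dotProduct_sub,
    dotProduct_smul, smul_eq_mul, Matrix.one_mulVec] at h0
  have e1 : A *ᵥ y = Lb *ᵥ y := hAv y hy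
  have e2 : (A * A) *ᵥ y = Lb *ᵥ (Lb *ᵥ y) := by
    rw [← Matrix.mulVec_mulVec, e1, hAv _ hz]
  rw [e1, e2] at h0
  have e3 : y ⬝ᵥ Lb *ᵥ (Lb *ᵥ y) = (Lb *ᵥ y) ⬝ᵥ (Lb *ᵥ y) := by
    rw [Matrix.dotProduct_mulVec]
    congr 1
    conv_lhs => rw [← hsymm]
    rw [Matrix.vecMul_transpose]
  rw [e3] at h0
  linarith

lemma one_sub_nonneg {lam2 lamN α : ℝ} (hlam2 : 0 < lam2) (hle : lam2 ≤ lamN)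
    (hα0 : 0 ≤ α) (hα : α ≤ 2 / (lam2 + lamN)) : 0 ≤ 1 - α * lam2 := by
  have hs : 0 < lam2 + lamN := by linarith
  have h2 : α * (lam2 + lamN) ≤ 2 := (le_div_iff₀ hs).mp hα
  nlinarith [mul_nonneg hα0 (sub_nonneg.2 hle)]

lemma contract {N : ℕ} {Lb : Matrix (Fin N) (Fin N) ℝ} {lam2 lamN : ℝ}
    (hN : 0 < N) (hsymm : Lb.IsSymm) (hone : Lb.mulVec 1 = 0)
    (hlam2 : 0 < lam2) (hle : lam2 ≤ lamN)
    (hlo : ∀ y : Fin N → ℝ, ∑ n, y n = 0 → lam2 * euclNorm y ^ 2 ≤ quadForm Lb y)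
    (hhi : ∀ y : Fin N → ℝ, ∑ n, y n = 0 → quadForm Lb y ≤ lamN * euclNorm y ^ 2)
    {α : ℝ} (hα0 : 0 ≤ α) (hα : α ≤ 2 / (lam2 + lamN))
    (y : Fin N → ℝ) (hy : ∑ n, y n = 0) :
    euclNorm (fun n => y n - α * (Lb.mulVec y) n) ≤ (1 - α * lam2) * euclNorm y := by
  have hs : 0 < lam2 + lamN := by linarith
  have h2 : α * (lam2 + lamN) ≤ 2 := (le_div_iff₀ hs).mp hα
  have hc : 0 ≤ 1 - α * lam2 := one_sub_nonneg hlam2 hle hα0 hα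
  set z : Fin N → ℝ := Lb.mulVec y with hzdef
  have key := key_quad hN hsymm hone hlam2 hle hlo hhi y hy
  have hq := hlo y hy
  rw [euclNorm_sq, quadForm_eq_dot] at hq
  have hyy : y ⬝ᵥ y = ∑ n, y n ^ 2 := dot_eq_sumsq y
  rw [← hyy] at hq
  -- squared inequality
  have hsq : ∑ n, (y n - α * z n) ^ 2 ≤ ((1 - α * lam2) * euclNorm y) ^ 2 := by
    have hexp : ∑ n, (y n - α * z n) ^ 2
        = y ⬝ᵥ y - 2 * α * (y ⬝ᵥ z) + α ^ 2 * (z ⬝ᵥ z) := by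
      simp only [dotProduct, Finset.mul_sum, ← Finset.sum_sub_distrib,
        ← Finset.sum_add_distrib]
      exact Finset.sum_congr rfl fun n _ => by ring
    have hrhs : ((1 - α * lam2) * euclNorm y) ^ 2 = (1 - α * lam2) ^ 2 * (y ⬝ᵥ y) := by
      rw [mul_pow, euclNorm_sq, ← hyy]
    rw [hexp, hrhs]
    nlinarith [mul_nonneg (mul_nonneg hα0 (by linarith : (0:ℝ) ≤ 2 - α * (lam2 + lamN)))
      (by linarith : 0 ≤ y ⬝ᵥ z - lam2 * (y ⬝ᵥ y))]
  have : euclNorm (fun n => y n - α * z n) ≤ Real.sqrt (((1 - α * lam2) * euclNorm y) ^ 2) := by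
    rw [euclNorm]
    exact Real.sqrt_le_sqrt hsq
  calc euclNorm (fun n => y n - α * z n) ≤ √(((1 - α * lam2) * euclNorm y) ^ 2) := this
    _ = (1 - α * lam2) * euclNorm y :=
        Real.sqrt_sq (mul_nonneg hc (Real.sqrt_nonneg _))

end KeyLemmas

theorem stmt_7 {N : ℕ} {Δ : ℝ} {M : ℕ} {α : ℕ → ℝ}
    {Lbar : Matrix (Fin N) (Fin N) ℝ} {lam2 lamN : ℝ}
    {Ω : Type} [mΩ : MeasurableSpace Ω] {Pr : Measure Ω}
    {x0 : Fin N → ℝ} {x : ℕ → Ω → Fin N → ℝ}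
    {L : ℕ → Ω → Matrix (Fin N) (Fin N) ℝ} {Υ Ψ : ℕ → Ω → Fin N → ℝ}
    {ℱ : Filtration ℕ mΩ}
    (h : QCModel N Δ M α Lbar lam2 lamN Pr x0 x L Υ Ψ ℱ)
    (hα_le : ∀ i, α i ≤ 2 / (lam2 + lamN)) :
    ∀ i : ℕ, euclNorm (fun n => (∫ ω, x i ω n ∂Pr) - avgOf x0) ≤
      Real.exp (-(lam2 * ∑ j ∈ Finset.range i, α j)) *
        euclNorm (fun n => x0 n - avgOf x0) := by
  haveI : IsProbabilityMeasure Pr := h.hprob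
  have hN0 : 0 < N := by have := h.hN; omega
  have hNR : (N:ℝ) ≠ 0 := Nat.cast_ne_zero.mpr hN0.ne'
  -- componentwise recursion
  have hcomp : ∀ i ω n, x (i + 1) ω n
      = x i ω n - α i * ((∑ m, L i ω n m * x i ω m) + Υ i ω n + Ψ i ω n) := by
    intro i ω n
    rw [h.hrec i ω]
    simp [Matrix.mulVec, dotProduct, mul_add]
  -- measurability with respect to the filtration
  have hxF : ∀ i, Measurable[ℱ i] (x i) := by
    intro i
    induction i with
    | zero =>
      have hx0' : x 0 = fun _ => x0 := funext h.hx0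
      rw [hx0']; exact measurable_const
    | succ i ih =>
      have hxi : Measurable[ℱ (i+1)] (x i) := ih.mono (ℱ.mono (Nat.le_succ i)) le_rfl
      have hGle : (MeasurableSpace.comap (fun ω n m => L i ω n m) inferInstance ⊔
           MeasurableSpace.comap (Υ i) inferInstance ⊔
           MeasurableSpace.comap (Ψ i) inferInstance) ≤ ℱ (i+1) := by
        rw [h.hℱ (i+1)]
        exact le_biSup (fun j => MeasurableSpace.comap (fun ω n m => L j ω n m) inferInstance ⊔
          MeasurableSpace.comap (Υ j) inferInstance ⊔
          MeasurableSpace.comap (Ψ j) inferInstance) (Set.mem_Iio.mpr (Nat.lt_succ_self i))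
      have hLmeas : Measurable[ℱ (i+1)] (fun ω (n : Fin N) (m : Fin N) => L i ω n m) :=
        (measurable_iff_comap_le.mpr le_rfl).mono
          ((le_sup_left.trans le_sup_left).trans hGle) le_rfl
      have hΥmeas : Measurable[ℱ (i+1)] (Υ i) :=
        (measurable_iff_comap_le.mpr le_rfl).mono
          ((le_sup_right.trans le_sup_left).trans hGle) le_rfl
      have hΨmeas : Measurable[ℱ (i+1)] (Ψ i) :=
        (measurable_iff_comap_le.mpr le_rfl).mono
          (le_sup_right.trans hGle) le_rfl
      refine @measurable_pi_lambda Ω (Fin N) (fun _ => ℝ) (ℱ (i+1)) _ (x (i+1)) fun n => ?_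
      have hre : (fun ω => x (i+1) ω n)
          = fun ω => x i ω n - α i * ((∑ m, L i ω n m * x i ω m) + Υ i ω n + Ψ i ω n) :=
        funext fun ω => hcomp i ω n
      rw [hre]
      apply Measurable.sub ((measurable_pi_apply n).comp hxi)
      apply Measurable.const_mul
      apply Measurable.add
      apply Measurable.add
      · apply Finset.measurable_sum
        intro m _
        exact ((measurable_pi_apply m).comp ((measurable_pi_apply n).comp hLmeas)).mul
          ((measurable_pi_apply m).comp hxi)
      · exact (measurable_pi_apply n).comp hΥmeas
      · exact (measurable_pi_apply n).comp hΨmeas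
  have hxM : ∀ i, Measurable (x i) := fun i => (hxF i).mono (ℱ.le i) le_rfl
  have hxMn : ∀ i n, Measurable fun ω => x i ω n := fun i n =>
    (measurable_pi_apply n).comp (hxM i)
  -- a.s. bound on entries of L
  have hLbd : ∀ i n m, ∀ᵐ ω ∂Pr, |L i ω n m| ≤ |Lbar n m| + 2 * N := by
    intro i n m
    filter_upwards [h.hL_op i] with ω hω
    have h1 := hω (Pi.single m 1)
    rw [euclNorm_single] at h1
    have h2 : ((L i ω - Lbar).mulVec (Pi.single m 1 : Fin N → ℝ)) n
        = L i ω n m - Lbar n m := by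
      simp [Matrix.sub_apply]
    have h3 := abs_le_euclNorm ((L i ω - Lbar).mulVec (Pi.single m 1 : Fin N → ℝ)) n
    rw [h2] at h3
    have h4 := abs_sub_abs_le_abs_sub (L i ω n m) (Lbar n m)
    have h5 : |L i ω n m - Lbar n m| ≤ 2 * N := by
      calc |L i ω n m - Lbar n m| ≤ euclNorm ((L i ω - Lbar).mulVec (Pi.single m 1 : Fin N → ℝ)) := h3
      _ ≤ 2 * N * 1 := h1
      _ = 2 * N := by ring
    linarith
  -- integrability
  have hΥc : ∀ i n, Integrable (fun ω => Υ i ω n) Pr := by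
    intro i n
    have h1 : Integrable (Υ i) Pr := (h.hΥ_L2 i).integrable one_le_two
    have := (ContinuousLinearMap.proj (R := ℝ) (φ := fun _ : Fin N => ℝ) n).integrable_comp h1
    simpa using this
  have hΨc : ∀ i n, Integrable (fun ω => Ψ i ω n) Pr := by
    intro i n
    have h1 : Integrable (Ψ i) Pr := (h.hΨ_L2 i).integrable one_le_two
    have := (ContinuousLinearMap.proj (R := ℝ) (φ := fun _ : Fin N => ℝ) n).integrable_comp h1
    simpa using this
  have hxint : ∀ i n, Integrable (fun ω => x i ω n) Pr := by
    intro i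
    induction i with
    | zero =>
      intro n
      have hre : (fun ω => x 0 ω n) = fun _ => x0 n := funext fun ω => by rw [h.hx0]
      rw [hre]; exact integrable_const _
    | succ i ih =>
      intro n
      have hLx : ∀ m, Integrable (fun ω => L i ω n m * x i ω m) Pr := fun m =>
        Integrable.bdd_mul (ih m) ((h.hL_meas i n m).aestronglyMeasurable)
          (by filter_upwards [hLbd i n m] with ω hω; simpa [Real.norm_eq_abs] using hω)
      have hre : (fun ω => x (i+1) ω n)
          = fun ω => x i ω n - α i * ((∑ m, L i ω n m * x i ω m) + Υ i ω n + Ψ i ω n) :=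
        funext fun ω => hcomp i ω n
      rw [hre]
      exact (ih n).sub ((((integrable_finset_sum univ fun m _ => hLx m).add
        (hΥc i n)).add (hΨc i n)).const_mul (α i))
  -- independence: product of an entry of L with the current state integrates to a product
  have hprod : ∀ i n m, ∫ ω, L i ω n m * x i ω m ∂Pr = Lbar n m * ∫ ω, x i ω m ∂Pr := by
    intro i n m
    have hind : Indep (MeasurableSpace.comap (fun ω n m => L i ω n m) inferInstance)
        (ℱ i) Pr := by
      have := (h.hindep i).indep (i := 0) (j := 3) (by decide)
      simpa using this
    have hLc : Measurable[MeasurableSpace.comap (fun ω n m => L i ω n m) inferInstance]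
        (fun ω => L i ω n m) :=
      (measurable_pi_apply m).comp ((measurable_pi_apply n).comp
        (measurable_iff_comap_le.mpr le_rfl))
    have hxc : Measurable[ℱ i] (fun ω => x i ω m) := (measurable_pi_apply m).comp (hxF i)
    have hIF : IndepFun (fun ω => L i ω n m) (fun ω => x i ω m) Pr := by
      have h1 := indep_of_indep_of_le_left hind (measurable_iff_comap_le.mp hLc)
      have h2 := indep_of_indep_of_le_right h1 (measurable_iff_comap_le.mp hxc)
      exact h2
    have h3 := hIF.integral_fun_mul_eq_mul_integral ((h.hL_meas i n m).aestronglyMeasurable)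
      (hxMn i m).aestronglyMeasurable
    rw [← h.hL_mean i n m]
    exact h3
  -- recursion for the means
  have hmean : ∀ i n, ∫ ω, x (i+1) ω n ∂Pr
      = (∫ ω, x i ω n ∂Pr) - α i * ∑ m, Lbar n m * ∫ ω, x i ω m ∂Pr := by
    intro i n
    have hLx : ∀ m, Integrable (fun ω => L i ω n m * x i ω m) Pr := fun m =>
      Integrable.bdd_mul (hxint i m) ((h.hL_meas i n m).aestronglyMeasurable)
        (by filter_upwards [hLbd i n m] with ω hω; simpa [Real.norm_eq_abs] using hω)
    have hsumint : Integrable (fun ω => ∑ m, L i ω n m * x i ω m) Pr :=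
      integrable_finset_sum univ fun m _ => hLx m
    calc ∫ ω, x (i+1) ω n ∂Pr
        = ∫ ω, (x i ω n - α i * ((∑ m, L i ω n m * x i ω m) + Υ i ω n + Ψ i ω n)) ∂Pr := by
          simp only [hcomp]
      _ = (∫ ω, x i ω n ∂Pr)
          - α i * ∫ ω, ((∑ m, L i ω n m * x i ω m) + Υ i ω n + Ψ i ω n) ∂Pr := by
          have h1 : Integrable (fun ω => (∑ m, L i ω n m * x i ω m) + Υ i ω n) Pr := by
            exact hsumint.add (hΥc i n)
          have h2 : Integrable
              (fun ω => (∑ m, L i ω n m * x i ω m) + Υ i ω n + Ψ i ω n) Pr := by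
            exact h1.add (hΨc i n)
          have h3 : Integrable
              (fun ω => α i * ((∑ m, L i ω n m * x i ω m) + Υ i ω n + Ψ i ω n)) Pr := by
            exact h2.const_mul (α i)
          rw [integral_sub (hxint i n) h3, integral_const_mul]
      _ = (∫ ω, x i ω n ∂Pr) - α i * ((∑ m, ∫ ω, L i ω n m * x i ω m ∂Pr) + 0 + 0) := by
          have h1 : Integrable (fun ω => (∑ m, L i ω n m * x i ω m) + Υ i ω n) Pr := by
            exact hsumint.add (hΥc i n)
          rw [integral_add h1 (hΨc i n), integral_add hsumint (hΥc i n),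
            integral_finset_sum univ fun m _ => hLx m, h.hΥ_mean i n, h.hΨ_mean i n]
      _ = (∫ ω, x i ω n ∂Pr) - α i * ∑ m, Lbar n m * ∫ ω, x i ω m ∂Pr := by
          rw [add_zero, add_zero]
          exact congrArg _ (congrArg _ (Finset.sum_congr rfl fun m _ => hprod i n m))
  -- initial mean
  have hμ0 : ∀ n, (∫ ω, x 0 ω n ∂Pr) = x0 n := by
    intro n
    have hre : (fun ω => x 0 ω n) = fun _ => x0 n := funext fun ω => by rw [h.hx0]
    rw [hre, integral_const]
    simp
  -- the mean deviations sum to zero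
  have hstep : ∀ i n, (∫ ω, x (i+1) ω n ∂Pr) - avgOf x0
      = ((∫ ω, x i ω n ∂Pr) - avgOf x0)
        - α i * (Lbar.mulVec (fun k => (∫ ω, x i ω k ∂Pr) - avgOf x0)) n := by
    intro i n
    have hrow := row_sum_zero h.hLbar_one n
    have hmv : (Lbar.mulVec (fun k => (∫ ω, x i ω k ∂Pr) - avgOf x0)) n
        = ∑ m, Lbar n m * ∫ ω, x i ω m ∂Pr := by
      simp only [Matrix.mulVec, dotProduct, mul_sub]
      rw [Finset.sum_sub_distrib, ← Finset.sum_mul, hrow, zero_mul, sub_zero]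
    rw [hmv, hmean i n]
    ring
  have hsumz : ∀ i, ∑ n, ((∫ ω, x i ω n ∂Pr) - avgOf x0) = 0 := by
    intro i
    induction i with
    | zero =>
      simp only [hμ0]
      rw [Finset.sum_sub_distrib, Finset.sum_const, card_univ, Fintype.card_fin,
        nsmul_eq_mul, avgOf]
      field_simp
      ring
    | succ i ih =>
      calc ∑ n, ((∫ ω, x (i+1) ω n ∂Pr) - avgOf x0)
          = ∑ n, (((∫ ω, x i ω n ∂Pr) - avgOf x0)
            - α i * (Lbar.mulVec (fun k => (∫ ω, x i ω k ∂Pr) - avgOf x0)) n) :=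
            Finset.sum_congr rfl fun n _ => hstep i n
        _ = (∑ n, ((∫ ω, x i ω n ∂Pr) - avgOf x0))
            - α i * ∑ n, (Lbar.mulVec (fun k => (∫ ω, x i ω k ∂Pr) - avgOf x0)) n := by
            rw [Finset.sum_sub_distrib, Finset.mul_sum]
        _ = 0 := by
            rw [ih, sum_mulVec_zero h.hLbar_symm h.hLbar_one]
            ring
  -- final induction
  intro i
  induction i with
  | zero =>
    simp only [Finset.range_zero, Finset.sum_empty, mul_zero, neg_zero, Real.exp_zero, one_mul]
    have hre : (fun n => (∫ ω, x 0 ω n ∂Pr) - avgOf x0) = fun n => x0 n - avgOf x0 :=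
      funext fun n => by rw [hμ0 n]
    rw [hre]
  | succ i ih =>
    have hco := contract hN0 h.hLbar_symm h.hLbar_one h.hlam2_pos h.hlam_le h.hspec_lo
      h.hspec_hi (le_of_lt (h.hα_pos i)) (hα_le i)
      (fun k => (∫ ω, x i ω k ∂Pr) - avgOf x0) (hsumz i)
    have heq : (fun n => (∫ ω, x (i+1) ω n ∂Pr) - avgOf x0)
        = fun n => ((fun k => (∫ ω, x i ω k ∂Pr) - avgOf x0) n
          - α i * (Lbar.mulVec (fun k => (∫ ω, x i ω k ∂Pr) - avgOf x0)) n) :=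
      funext fun n => hstep i n
    have hexp1 : 1 - α i * lam2 ≤ Real.exp (-(α i * lam2)) := by
      have := Real.add_one_le_exp (-(α i * lam2)); linarith
    calc euclNorm (fun n => (∫ ω, x (i+1) ω n ∂Pr) - avgOf x0)
        ≤ (1 - α i * lam2) * euclNorm (fun k => (∫ ω, x i ω k ∂Pr) - avgOf x0) := by
          rw [heq]; exact hco
      _ ≤ Real.exp (-(α i * lam2)) * euclNorm (fun k => (∫ ω, x i ω k ∂Pr) - avgOf x0) :=
          mul_le_mul_of_nonneg_right hexp1 (euclNorm_nonneg _)
      _ ≤ Real.exp (-(α i * lam2)) * (Real.exp (-(lam2 * ∑ j ∈ Finset.range i, α j))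
            * euclNorm (fun n => x0 n - avgOf x0)) :=
          mul_le_mul_of_nonneg_left ih (le_of_lt (Real.exp_pos _))
      _ = Real.exp (-(lam2 * ∑ j ∈ Finset.range (i+1), α j))
            * euclNorm (fun n => x0 n - avgOf x0) := by
          rw [Finset.sum_range_succ, ← mul_assoc, ← Real.exp_add]
          congr 2; ring

end
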